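/- For every natural number n ≥ 1, the q-derivative of h_n satisfies D_q h_n(x,s) = [n]_q · h_{n-1}(x,s). -/

import Mathlib

noncomputable section

/-- The field `ℚ(q,s)` of rational functions in two indeterminates. -/
abbrev F : Type := FractionRing (MvPolynomial (Fin 2) ℚ)

/-- The indeterminate `q`. -/
def q : F := algebraMap (MvPolynomial (Fin 2) ℚ) F (MvPolynomial.X 0)

/-- The indeterminate `s`. -/
def s : F := algebraMap (MvPolynomial (Fin 2) ℚ) F (MvPolynomial.X 1)

/-- The q-integer `[n]_q = 1 + q + ⋯ + q^{n-1}`. -/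
def qInt (n : ℕ) : F := ∑ i ∈ Finset.range n, q ^ i

/-- The q-factorial `[n]_q! = ∏_{k=1}^n [k]_q`. -/
def qFact (n : ℕ) : F := ∏ k ∈ Finset.range n, qInt (k + 1)

/-- The q-binomial coefficient `[n choose k]_q = [n]_q!/([k]_q! [n-k]_q!)`. -/
def qBinom (n k : ℕ) : F := qFact n / (qFact k * qFact (n - k))

/-- The operator `X` of multiplication by `x` on `F[x]`. -/
def Xop : Module.End F (Polynomial F) := LinearMap.mulLeft F Polynomial.X

/-- Division by `x` (discarding the constant term), as a linear map. -/
def divXL : Polynomial F →ₗ[F] Polynomial F where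
  toFun := Polynomial.divX
  map_add' p r := Polynomial.divX_add
  map_smul' a p := by
    ext n
    simp [Polynomial.coeff_divX, Polynomial.coeff_smul]

/-- The q-derivative `D_q f(x) = (f(qx) - f(x))/((q-1)x)`; it is the F-linear
operator on `F[x]` determined by `D_q x^n = [n]_q x^{n-1}`. -/
def Dq : Module.End F (Polynomial F) :=
  (q - 1)⁻¹ •
    (divXL ∘ₗ
      ((Polynomial.aeval (Polynomial.C q * Polynomial.X)).toLinearMap - LinearMap.id))

/-- The polynomials `h_n(x,t) = Σ_j q^{j²} t^j [n]_q!/((1+q)⋯(1+q^j)·[j]_q!·[n-2j]_q!)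
x^{n-2j}` (the parameter `t` will be specialized to `s` or `q²s`). -/
def h (t : F) (n : ℕ) : Polynomial F :=
  ∑ j ∈ Finset.range (n / 2 + 1),
    Polynomial.C (q ^ (j ^ 2) * t ^ j * qFact n /
        ((∏ i ∈ Finset.range j, (1 + q ^ (i + 1))) * qFact j * qFact (n - 2 * j))) *
      Polynomial.X ^ (n - 2 * j)



/-! ### Auxiliary lemmas -/

lemma evalTwo_ne {p : MvPolynomial (Fin 2) ℚ}
    (hp : MvPolynomial.eval (fun _ => (2:ℚ)) p ≠ 0) :
    algebraMap (MvPolynomial (Fin 2) ℚ) F p ≠ 0 := by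
  have hinj := IsFractionRing.injective (MvPolynomial (Fin 2) ℚ) F
  rw [map_ne_zero_iff _ hinj]
  intro h0
  exact hp (by rw [h0]; simp)

lemma q_pow_sub_one_ne {m : ℕ} (hm : 1 ≤ m) : q ^ m - 1 ≠ 0 := by
  have h1 : q ^ m - 1
      = algebraMap (MvPolynomial (Fin 2) ℚ) F (MvPolynomial.X 0 ^ m - 1) := by
    simp [q, map_sub, map_pow]
  rw [h1]
  apply evalTwo_ne
  have h2 : (1:ℚ) < 2 ^ m := by
    exact one_lt_pow₀ (by norm_num) (by omega)
  simp only [map_sub, map_pow, map_one, MvPolynomial.eval_X]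
  intro h3
  nlinarith

lemma qInt_ne_zero {m : ℕ} (hm : 1 ≤ m) : qInt m ≠ 0 := by
  intro h0
  have hg : qInt m * (q - 1) = q ^ m - 1 := by rw [qInt]; exact geom_sum_mul q m
  rw [h0, zero_mul] at hg
  exact q_pow_sub_one_ne hm hg.symm

lemma q_sub_one_ne : q - 1 ≠ 0 := by
  have := q_pow_sub_one_ne (m := 1) le_rfl
  simpa using this

lemma inv_mul_q_pow (m : ℕ) : (q - 1)⁻¹ * (q ^ m - 1) = qInt m := by
  have hg : qInt m * (q - 1) = q ^ m - 1 := by rw [qInt]; exact geom_sum_mul q m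
  rw [← hg, mul_comm (qInt m) (q - 1), inv_mul_cancel_left₀ q_sub_one_ne]

lemma qFact_ne_zero (n : ℕ) : qFact n ≠ 0 := by
  rw [qFact]
  exact Finset.prod_ne_zero_iff.mpr fun k _ => qInt_ne_zero (Nat.succ_le_succ (Nat.zero_le k))

lemma prodP_ne_zero (j : ℕ) : (∏ i ∈ Finset.range j, (1 + q ^ (i + 1))) ≠ 0 := by
  apply Finset.prod_ne_zero_iff.mpr
  intro i _
  have h1 : (1:F) + q ^ (i+1)
      = algebraMap (MvPolynomial (Fin 2) ℚ) F (1 + MvPolynomial.X 0 ^ (i+1)) := by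
    simp [q, map_add, map_pow]
  rw [h1]
  apply evalTwo_ne
  simp only [map_add, map_one, map_pow, MvPolynomial.eval_X]
  positivity

lemma qFact_succ' {n : ℕ} (hn : 1 ≤ n) : qFact n = qFact (n - 1) * qInt n := by
  conv_lhs => rw [show n = (n-1)+1 from by omega]
  rw [qFact, Finset.prod_range_succ, ← qFact, show n-1+1 = n from by omega]

lemma divX_X_pow_succ (k : ℕ) :
    (Polynomial.X ^ (k+1) : Polynomial F).divX = Polynomial.X ^ k := by
  ext n
  simp [Polynomial.coeff_divX, Polynomial.coeff_X_pow]

lemma Dq_C_mul_X_pow (a : F) (m : ℕ) :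
    Dq (Polynomial.C a * Polynomial.X ^ m)
      = Polynomial.C (a * qInt m) * Polynomial.X ^ (m - 1) := by
  rw [Dq]
  simp only [LinearMap.smul_apply, LinearMap.comp_apply, LinearMap.sub_apply,
    AlgHom.toLinearMap_apply, LinearMap.id_apply]
  rw [map_mul, Polynomial.aeval_C, map_pow, Polynomial.aeval_X]
  have key : (algebraMap F (Polynomial F)) a * (Polynomial.C q * Polynomial.X) ^ m
      - Polynomial.C a * Polynomial.X ^ m
      = Polynomial.C (a * (q ^ m - 1)) * Polynomial.X ^ m := by
    rw [Polynomial.algebraMap_eq, mul_pow, ← Polynomial.C_pow]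
    rw [map_mul, map_sub, map_one]
    ring
  rw [key]
  have hdiv : divXL (Polynomial.C (a * (q ^ m - 1)) * Polynomial.X ^ m)
      = Polynomial.C (a * (q ^ m - 1)) * Polynomial.X ^ (m - 1) ∨ m = 0 := by
    cases m with
    | zero => exact Or.inr rfl
    | succ k =>
      left
      show (Polynomial.C (a * (q ^ (k+1) - 1)) * Polynomial.X ^ (k+1)).divX = _
      rw [Polynomial.divX_C_mul, divX_X_pow_succ]
      norm_num
  rcases hdiv with hdiv | rfl
  · rw [hdiv, Polynomial.smul_eq_C_mul, ← mul_assoc, ← map_mul, ← mul_assoc,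
      mul_comm ((q-1)⁻¹) a, mul_assoc, inv_mul_q_pow]
  · simp [qInt, divXL, Polynomial.divX_C]

/- STATEMENT 6: D_q h_n(x,s) = [n]_q h_{n-1}(x,s) for n ≥ 1. -/
set_option maxHeartbeats 2000000 in
theorem qDeriv_h (n : ℕ) (hn : 1 ≤ n) :
    Dq (h s n) = qInt n • h s (n - 1) := by
  rw [h, h, map_sum, Finset.smul_sum]
  simp only [Dq_C_mul_X_pow, smul_mul_assoc, Polynomial.smul_C, smul_eq_mul]
  rw [← Finset.sum_subset
      (Finset.range_subset_range.mpr (by omega : (n-1)/2 + 1 ≤ n/2 + 1))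
      (by
        intro j hj hj'
        rw [Finset.mem_range] at hj
        rw [Finset.mem_range] at hj'
        have hz : n - 2*j = 0 := by omega
        rw [hz]
        simp [qInt])]
  refine Finset.sum_congr rfl ?_
  intro j hj
  rw [Finset.mem_range] at hj
  have h2j : 2*j ≤ n - 1 := by omega
  rw [show n - 2*j - 1 = n - 1 - 2*j from by omega, Polynomial.smul_eq_C_mul,
    ← mul_assoc, ← Polynomial.C_mul]
  congr 1
  have h1 : qFact n = qFact (n - 1) * qInt n := qFact_succ' hn
  have h2 : qFact (n - 2*j) = qFact (n - 1 - 2*j) * qInt (n - 2*j) := by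
    have := qFact_succ' (n := n - 2*j) (by omega)
    rw [show n - 2*j - 1 = n - 1 - 2*j from by omega] at this
    exact this
  rw [h1, h2]
  have e1 := prodP_ne_zero j
  have e2 := qFact_ne_zero j
  have e3 := qFact_ne_zero (n - 1 - 2*j)
  have e4 : qInt (n - 2*j) ≠ 0 := qInt_ne_zero (by omega)
  field_simp

end
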